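/- Let R be a Noetherian local domain with maximal ideal m and fraction field Q, and let R̃ be an intermediate ring R ⊆ R̃ ⊆ Q that is a discrete valuation ring with maximal ideal n and is finitely generated as an R-module; assume the inclusion R ⊆ R̃ induces an isomorphism of residue fields, i.e. for every u ∈ R̃ there exists h ∈ R with u − h ∈ n. Let C = {x ∈ R : x·R̃ ⊆ R} be the conductor. Then R̃ = R : C, where R : C = {x ∈ Q : x·C ⊆ R}. -/

import Mathlib

set_option synthInstance.maxHeartbeats 1000000
set_option maxHeartbeats 1000000

open IsLocalRing

namespace TraceCond

/-- The trace ideal of an ideal `I` of `R`: the sum `Σ_φ φ(I)` over all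
`R`-linear maps `φ : I → R`. -/
noncomputable def traceIdeal {R : Type*} [CommRing R] (I : Ideal R) : Ideal R :=
  ⨆ φ : ↥I →ₗ[R] R, LinearMap.range φ

/-- The conductor `C_{R̃/R} = {x ∈ R : x·R̃ ⊆ R}` of an intermediate ring
`R ⊆ R̃ ⊆ Q`. -/
def conductorSet (R : Type*) [CommRing R] {Q : Type*} [CommRing Q] [Algebra R Q]
    (Rt : Subalgebra R Q) : Set R :=
  {x : R | ∀ y ∈ Rt, ∃ r : R, algebraMap R Q r = algebraMap R Q x * y}

end TraceCond

open TraceCond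

/-- if `R` is a Noetherian local domain, `R ⊆ R̃ ⊆ Q(R)` with `R̃`
a DVR which is a finite `R`-module, and the inclusion induces an isomorphism of
residue fields, then `R̃ = R : C` where `C` is the conductor. -/
theorem stmt_18 (R : Type*) [CommRing R] [IsDomain R] [IsNoetherianRing R]
    [IsLocalRing R]
    (Rt : Subalgebra R (FractionRing R)) [IsDomain ↥Rt]
    [IsDiscreteValuationRing ↥Rt] [Module.Finite R ↥Rt]
    (hres : ∀ u : ↥Rt, ∃ h : R,
      u - algebraMap R ↥Rt h ∈ IsLocalRing.maximalIdeal ↥Rt) :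
    ∀ x : FractionRing R,
      x ∈ Rt ↔ ∀ c ∈ conductorSet R Rt,
        ∃ r : R, algebraMap R (FractionRing R) r =
          x * algebraMap R (FractionRing R) c := by
  set Q := FractionRing R
  have hinj : Function.Injective (algebraMap R Q) := IsFractionRing.injective R Q
  -- the conductor, viewed as an ideal of `R̃`
  set C : Ideal ↥Rt :=
    { carrier := {u : ↥Rt | ∀ v : ↥Rt, ∃ r : R, algebraMap R Q r = (u : Q) * (v : Q)}
      add_mem' := by
        rintro a b ha hb v
        obtain ⟨r1, h1⟩ := ha v
        obtain ⟨r2, h2⟩ := hb v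
        exact ⟨r1 + r2, by push_cast [map_add, h1, h2]; ring⟩
      zero_mem' := by
        intro v
        exact ⟨0, by push_cast [map_zero]; ring⟩
      smul_mem' := by
        rintro w u hu v
        obtain ⟨r, hr⟩ := hu (w * v)
        refine ⟨r, ?_⟩
        rw [hr]
        have hwu : (w • u : ↥Rt) = w * u := rfl
        rw [hwu]
        push_cast
        ring } with hC
  have memC : ∀ u : ↥Rt, u ∈ C ↔
      ∀ v : ↥Rt, ∃ r : R, algebraMap R Q r = (u : Q) * (v : Q) := fun u => Iff.rfl
  -- the conductor is nonzero
  have hCne : C ≠ ⊥ := by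
    have hfg : (Subalgebra.toSubmodule Rt).FG := by
      have : Module.Finite R ↥(Subalgebra.toSubmodule Rt) :=
        (inferInstance : Module.Finite R ↥Rt)
      exact Module.Finite.iff_fg.mp this
    obtain ⟨s, hs⟩ := hfg
    obtain ⟨b, hb⟩ := IsLocalization.exist_integer_multiples_of_finset
      (nonZeroDivisors R) s
    -- every element of `Rt` multiplied by `b` is integral
    have hint : ∀ u : ↥Rt, IsLocalization.IsInteger R ((b : R) • (u : Q)) := by
      intro u
      have hu : (u : Q) ∈ Subalgebra.toSubmodule Rt := u.2
      rw [← hs] at hu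
      refine Submodule.span_induction (fun a ha => hb a ha) ?_ ?_ ?_ hu
      · simpa using IsLocalization.isInteger_zero
      · intro a c _ _ ha hc
        rw [smul_add]; exact IsLocalization.isInteger_add ha hc
      · intro r a _ ha
        rw [smul_comm]; exact IsLocalization.isInteger_smul ha
    have hbmem : algebraMap R ↥Rt (b : R) ∈ C := by
      intro v
      obtain ⟨r, hr⟩ := hint v
      refine ⟨r, ?_⟩
      rw [hr]
      simp [Algebra.smul_def]
    intro hbot
    rw [hbot] at hbmem
    have : algebraMap R ↥Rt (b : R) = 0 := hbmem
    have hb0 : (b : R) ≠ 0 := nonZeroDivisors.coe_ne_zero b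
    apply hb0
    have : (algebraMap R Q) (b : R) = 0 := by
      have := congrArg (Subtype.val) this
      simpa using this
    exact hinj (by simpa using this)
  -- a uniformizer
  obtain ⟨ϖ, hϖ⟩ := IsDiscreteValuationRing.exists_irreducible ↥Rt
  obtain ⟨n, hn⟩ := IsDiscreteValuationRing.ideal_eq_span_pow_irreducible hCne hϖ
  have hπn : (ϖ ^ n) ∈ C := by
    rw [hn]; exact Ideal.mem_span_singleton_self _
  have hϖQ : ((ϖ : Q)) ≠ 0 := by
    intro h
    exact hϖ.ne_zero (Subtype.coe_injective (by simpa using h))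
  intro x
  constructor
  · intro hx c hc
    obtain ⟨r, hr⟩ := hc x hx
    exact ⟨r, by rw [hr]; ring⟩
  · intro hx
    -- `ϖ^n` comes from an element `r0` of `R` which lies in the conductor set
    obtain ⟨r0, hr0⟩ := hπn 1
    rw [Subalgebra.coe_one, mul_one] at hr0
    have hr0c : r0 ∈ conductorSet R Rt := by
      intro y hy
      obtain ⟨r, hr⟩ := hπn ⟨y, hy⟩
      exact ⟨r, by rw [hr, hr0]⟩
    obtain ⟨r, hr⟩ := hx r0 hr0c
    -- `r` lies in the conductor ideal of `R̃`
    have hrC : algebraMap R ↥Rt r ∈ C := by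
      intro v
      obtain ⟨c, hcv⟩ := hπn v
      have hcc : c ∈ conductorSet R Rt := by
        intro y hy
        obtain ⟨r', hr'⟩ := hπn (v * ⟨y, hy⟩)
        refine ⟨r', ?_⟩
        rw [hr', hcv]
        push_cast
        ring
      obtain ⟨r', hr'⟩ := hx c hcc
      refine ⟨r', ?_⟩
      have hcoe : ((algebraMap R ↥Rt r : ↥Rt) : Q) = algebraMap R Q r := by
        simp [Q]
      rw [hr', hcv, hcoe, hr, hr0]
      push_cast
      ring
    rw [hn, Ideal.mem_span_singleton'] at hrC
    obtain ⟨u, hu⟩ := hrC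
    have hcoe : ((algebraMap R ↥Rt r : ↥Rt) : Q) = algebraMap R Q r := by simp [Q]
    have key : (u : Q) * (ϖ : Q) ^ n = x * (ϖ : Q) ^ n := by
      have h2 := congrArg (Subtype.val) hu
      push_cast at h2
      rw [h2, hr, hr0]
      push_cast
      ring
    have hx' : x = (u : Q) := by
      have hπn0 : ((ϖ : Q)) ^ n ≠ 0 := pow_ne_zero _ hϖQ
      exact (mul_right_cancel₀ hπn0 key).symm
    rw [hx']
    exact u.2
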